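/- Let f : ℝ → ℝ be convex with f(0) = 0, let h ∈ ℝ^p with h_i ≠ 0 for all i, and let Q_c = {z ∈ {0,1}^p : 𝟙^⊤z ≤ 1}. Then the closure of the convex hull of Z_{Q_c} = {(z, β, t) : z ∈ Q_c, f(h^⊤β) ≤ t, β_i(1 − z_i) = 0 ∀ i ∈ [p]} equals {(z, β, t) ∈ [0,1]^p × ℝ^p × ℝ : 𝟙^⊤z ≤ 1 and ∑_{i=1}^p z_i·f(h_iβ_i / z_i) ≤ t}, where each perspective value at z_i = 0 is interpreted via the limit convention. -/

import Mathlib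

open Filter Topology

/-- The perspective value `w·f(x/w)`, valued in `EReal`, where at `w ≤ 0` (only `w = 0` is ever
used) the value is interpreted via the limit convention `0·f(x/0) = lim_{w→0⁺} w·f(x/w)`. -/
noncomputable def persp (f : ℝ → ℝ) (x w : ℝ) : EReal :=
  if 0 < w then ((w * f (x / w) : ℝ) : EReal)
  else Filter.limsup (fun v : ℝ => ((v * f (x / v) : ℝ) : EReal)) (nhdsWithin 0 (Set.Ioi 0))

/-- The set `Z_Q = {(z,β,t) : z ∈ Q, f(hᵀβ) ≤ t, βᵢ(1-zᵢ) = 0 ∀i}`. -/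
def ZQh (p : ℕ) (Q : Set (Fin p → ℝ)) (f : ℝ → ℝ) (h : Fin p → ℝ) :
    Set ((Fin p → ℝ) × (Fin p → ℝ) × ℝ) :=
  {x | x.1 ∈ Q ∧ f (∑ i, h i * x.2.1 i) ≤ x.2.2 ∧ ∀ i, x.2.1 i * (1 - x.1 i) = 0}

section helpers
variable {f : ℝ → ℝ}

/-- subgradient existence -/
lemma lem_subgrad (hf : ConvexOn ℝ Set.univ f) (y : ℝ) :
    ∃ a : ℝ, ∀ u, f y + a * (u - y) ≤ f u := by
  set T : Set ℝ := (fun u => (f y - f u) / (y - u)) '' Set.Iio y with hT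
  have hTne : T.Nonempty := ⟨(f y - f (y-1)) / (y - (y-1)), ⟨y-1, by norm_num, rfl⟩⟩
  have key : ∀ u ∈ Set.Iio y, ∀ v, y < v →
      (f y - f u) / (y - u) ≤ (f v - f y) / (v - y) := by
    intro u hu v hv
    have := hf.slope_mono_adjacent (Set.mem_univ u) (Set.mem_univ v) hu hv
    simpa using this
  have hbdd : BddAbove T := by
    refine ⟨(f (y+1) - f y) / ((y+1) - y), ?_⟩
    rintro _ ⟨u, hu, rfl⟩
    exact key u hu (y+1) (by norm_num)
  refine ⟨sSup T, fun u => ?_⟩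
  rcases lt_trichotomy u y with hu | rfl | hu
  · have h1 : (f y - f u) / (y - u) ≤ sSup T := le_csSup hbdd ⟨u, hu, rfl⟩
    have h2 : (0:ℝ) < y - u := by linarith
    rw [div_le_iff₀ h2] at h1
    nlinarith
  · simp
  · have h1 : sSup T ≤ (f u - f y) / (u - y) := csSup_le hTne (by
      rintro _ ⟨v, hv, rfl⟩; exact key v hv u hu)
    have h2 : (0:ℝ) < u - y := by linarith
    rw [le_div_iff₀ h2] at h1
    nlinarith

lemma lem_cont (hf : ConvexOn ℝ Set.univ f) : Continuous f := by
  rw [← continuousOn_univ]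
  exact hf.continuousOn isOpen_univ

/-- antitonicity of the perspective in w on positives -/
lemma lem_antitone (hf : ConvexOn ℝ Set.univ f) (hf0 : f 0 = 0) (x : ℝ) {v v' : ℝ}
    (hv : 0 < v) (hvv' : v ≤ v') : v' * f (x / v') ≤ v * f (x / v) := by
  have hv' : 0 < v' := lt_of_lt_of_le hv hvv'
  have hs0 : 0 ≤ v / v' := by positivity
  have hs1 : v / v' ≤ 1 := by rw [div_le_one hv']; exact hvv'
  have hx : x / v' = (v/v') • (x/v) + (1 - v/v') • (0:ℝ) := by
    simp only [smul_eq_mul, mul_zero, add_zero]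
    field_simp
  have hs1' : (0:ℝ) ≤ 1 - v/v' := by linarith
  have hsum : v/v' + (1 - v/v') = 1 := by ring
  have := hf.2 (Set.mem_univ (x/v)) (Set.mem_univ (0:ℝ)) hs0 hs1' hsum
  rw [← hx, hf0] at this
  simp only [smul_eq_mul, mul_zero, add_zero] at this
  calc v' * f (x / v') ≤ v' * (v/v' * f (x/v)) := by
        apply mul_le_mul_of_nonneg_left this hv'.le
    _ = v * f (x/v) := by field_simp
end helpers

section rep
variable {f : ℝ → ℝ}

/-- the set of affine minorants of `f` -/
def AffMin (f : ℝ → ℝ) : Set (ℝ × ℝ) := {ab | ∀ u, ab.1 * u + ab.2 ≤ f u}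

lemma lem_S_nonempty (hf : ConvexOn ℝ Set.univ f) : (AffMin f).Nonempty := by
  obtain ⟨a, ha⟩ := lem_subgrad hf 0
  exact ⟨(a, f 0), fun u => by have := ha u; simpa [add_comm] using by linarith⟩

lemma lem_bZero (hf0 : f 0 = 0) {ab : ℝ × ℝ} (hab : ab ∈ AffMin f) : ab.2 ≤ 0 := by
  have := hab 0; simpa [hf0] using this

/-- the key pointwise bound for positive w -/
lemma lem_affine_le_pos {ab : ℝ × ℝ} (hab : ab ∈ AffMin f) (x : ℝ) {w : ℝ} (hw : 0 < w) :
    ab.1 * x + ab.2 * w ≤ w * f (x / w) := by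
  have := hab (x / w)
  have h2 : w * (ab.1 * (x/w) + ab.2) ≤ w * f (x/w) := mul_le_mul_of_nonneg_left this hw.le
  calc ab.1 * x + ab.2 * w = w * (ab.1 * (x/w) + ab.2) := by field_simp; try ring
    _ ≤ w * f (x/w) := h2

lemma lem_affine_le {ab : ℝ × ℝ} (hab : ab ∈ AffMin f) (x : ℝ) {w : ℝ} (hw : 0 ≤ w) :
    ((ab.1 * x + ab.2 * w : ℝ) : EReal) ≤ persp f x w := by
  rcases hw.lt_or_eq with hw | hw
  · rw [persp, if_pos hw]
    exact_mod_cast lem_affine_le_pos hab x hw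
  · subst hw
    rw [persp, if_neg (lt_irrefl 0)]
    have hev : ∀ᶠ v in nhdsWithin (0:ℝ) (Set.Ioi 0),
        ((ab.1 * x + ab.2 * v : ℝ) : EReal) ≤ ((v * f (x / v) : ℝ) : EReal) := by
      filter_upwards [eventually_mem_nhdsWithin] with v hv
      exact_mod_cast lem_affine_le_pos hab x hv
    have hlim : Tendsto (fun v : ℝ => ((ab.1 * x + ab.2 * v : ℝ) : EReal))
        (nhdsWithin (0:ℝ) (Set.Ioi 0)) (𝓝 ((ab.1 * x + ab.2 * 0 : ℝ) : EReal)) := by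
      rw [EReal.tendsto_coe]
      apply Tendsto.mono_left _ nhdsWithin_le_nhds
      exact (tendsto_const_nhds.add ((continuous_mul_left ab.2).tendsto 0))
    calc ((ab.1 * x + ab.2 * 0 : ℝ) : EReal) = limsup (fun v : ℝ => ((ab.1 * x + ab.2 * v : ℝ) : EReal)) (nhdsWithin (0:ℝ) (Set.Ioi 0)) := (hlim.limsup_eq).symm
      _ ≤ _ := limsup_le_limsup hev (by isBoundedDefault) (by isBoundedDefault)

/-- for v > 0, the perspective value at v bounds below persp at 0 -/
lemma lem_G_le_persp0 (hf : ConvexOn ℝ Set.univ f) (hf0 : f 0 = 0) (x : ℝ) {v : ℝ} (hv : 0 < v) :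
    ((v * f (x / v) : ℝ) : EReal) ≤ persp f x 0 := by
  rw [persp, if_neg (lt_irrefl 0)]
  have hev : ∀ᶠ u in nhdsWithin (0:ℝ) (Set.Ioi 0),
      ((v * f (x / v) : ℝ) : EReal) ≤ ((u * f (x / u) : ℝ) : EReal) := by
    have h1 : Set.Iio v ∈ nhdsWithin (0:ℝ) (Set.Ioi 0) :=
      nhdsWithin_le_nhds (Iio_mem_nhds hv)
    filter_upwards [h1, eventually_mem_nhdsWithin] with u hu hu0
    exact_mod_cast lem_antitone hf hf0 x hu0 (le_of_lt hu)
  calc ((v * f (x / v) : ℝ) : EReal)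
      = limsup (fun _ : ℝ => ((v * f (x / v) : ℝ) : EReal)) (nhdsWithin (0:ℝ) (Set.Ioi 0)) :=
        (limsup_const _).symm
    _ ≤ _ := limsup_le_limsup hev (by isBoundedDefault) (by isBoundedDefault)

lemma lem_persp_rep (hf : ConvexOn ℝ Set.univ f) (hf0 : f 0 = 0) (x : ℝ) {w : ℝ} (hw : 0 ≤ w) :
    persp f x w = ⨆ ab : AffMin f, ((ab.1.1 * x + ab.1.2 * w : ℝ) : EReal) := by
  apply le_antisymm
  · rcases hw.lt_or_eq with hw' | hw'
    · rw [persp, if_pos hw']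
      obtain ⟨a, ha⟩ := lem_subgrad hf (x / w)
      have hmem : (a, f (x/w) - a * (x/w)) ∈ AffMin f := by
        intro u; have := ha u; simp only; linarith
      have : ((w * f (x/w) : ℝ) : EReal) = ((a * x + (f (x/w) - a * (x/w)) * w : ℝ) : EReal) := by
        norm_cast
        field_simp
        try ring
      rw [this]
      exact le_iSup (fun ab : AffMin f => ((ab.1.1 * x + ab.1.2 * w : ℝ) : EReal)) ⟨_, hmem⟩
    · subst hw'
      rw [persp, if_neg (lt_irrefl 0)]
      refine limsup_le_of_le (by isBoundedDefault) ?_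
      filter_upwards [eventually_mem_nhdsWithin] with v hv
      obtain ⟨a, ha⟩ := lem_subgrad hf (x / v)
      have hmem : (a, f (x/v) - a * (x/v)) ∈ AffMin f := by
        intro u; have := ha u; simp only; linarith
      have hb : f (x/v) - a * (x/v) ≤ 0 := lem_bZero hf0 hmem
      have hvpos : (0:ℝ) < v := Set.mem_Ioi.mp hv
      have hv0 : v ≠ 0 := ne_of_gt hvpos
      have heq : v * f (x/v) = a * x + (f (x/v) - a * (x/v)) * v := by
        field_simp
        ring
      have hle : v * f (x/v) ≤ a * x + (f (x/v) - a * (x/v)) * 0 := by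
        rw [heq]
        have := mul_le_mul_of_nonneg_left hb (le_of_lt (Set.mem_Ioi.mp hv))
        nlinarith [Set.mem_Ioi.mp hv]
      calc ((v * f (x/v) : ℝ) : EReal) ≤ ((a * x + (f (x/v) - a * (x/v)) * 0 : ℝ) : EReal) := by
            exact_mod_cast hle
        _ ≤ _ := le_iSup (fun ab : AffMin f => ((ab.1.1 * x + ab.1.2 * (0:ℝ) : ℝ) : EReal)) ⟨_, hmem⟩
  · exact iSup_le fun ab => lem_affine_le ab.2 x hw

lemma lem_persp_ne_bot (hf : ConvexOn ℝ Set.univ f) (x : ℝ) {w : ℝ} (hw : 0 ≤ w) :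
    persp f x w ≠ ⊥ := by
  obtain ⟨ab, hab⟩ := lem_S_nonempty hf
  intro hbot
  have h2 := lem_affine_le hab x hw
  rw [hbot] at h2
  exact EReal.coe_ne_bot _ (le_bot_iff.mp h2)

lemma lem_persp00 (hf0 : f 0 = 0) : persp f 0 0 = 0 := by
  rw [persp, if_neg (lt_irrefl 0)]
  have : (fun v : ℝ => ((v * f (0 / v) : ℝ) : EReal)) = fun _ => (0 : EReal) := by
    funext v; simp [hf0]
  rw [this, limsup_const]

lemma lem_persp_one (x : ℝ) : persp f x 1 = ((f x : ℝ) : EReal) := by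
  rw [persp, if_pos one_pos]; norm_num

end rep

section sums
variable {f : ℝ → ℝ}

/-- coercion of a finite real sum into EReal -/
lemma ecoe_sum {ι : Type*} (s : Finset ι) (g : ι → ℝ) :
    ((∑ i ∈ s, g i : ℝ) : EReal) = ∑ i ∈ s, ((g i : ℝ) : EReal) :=
  map_sum (⟨⟨(fun r : ℝ => (r : EReal)), EReal.coe_zero⟩, fun a b => EReal.coe_add a b⟩ : ℝ →+ EReal) g s

lemma esum_ne_bot {ι : Type*} (s : Finset ι) (g : ι → EReal) (hg : ∀ i, g i ≠ ⊥) :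
    ∑ i ∈ s, g i ≠ ⊥ := by
  classical
  induction s using Finset.induction_on with
  | empty => simp
  | insert _ _ hx ih =>
      rw [Finset.sum_insert hx]
      rw [Ne, EReal.add_eq_bot_iff]
      push_neg
      exact ⟨hg _, ih⟩

lemma esum_ne_top {ι : Type*} [Fintype ι] (g : ι → EReal) (hg : ∀ i, g i ≠ ⊥) {t : ℝ}
    (hle : ∑ i, g i ≤ (t : EReal)) (j : ι) : g j ≠ ⊤ := by
  classical
  intro htop
  have h1 : ∑ i, g i = g j + ∑ i ∈ Finset.univ.erase j, g i :=
    (Finset.add_sum_erase _ _ (Finset.mem_univ j)).symm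
  rw [htop, EReal.top_add_of_ne_bot (esum_ne_bot _ _ hg)] at h1
  rw [h1] at hle
  exact (lt_irrefl _ (lt_of_le_of_lt hle (EReal.coe_lt_top t)))

/-- the main finite-sum characterization -/
lemma lem_sum_le_iff (hf : ConvexOn ℝ Set.univ f) (hf0 : f 0 = 0) {p : ℕ}
    (x w : Fin p → ℝ) (hw : ∀ i, 0 ≤ w i) (t : ℝ) :
    (∑ i, persp f (x i) (w i)) ≤ (t : EReal) ↔
      ∀ σ : Fin p → AffMin f, ∑ i, ((σ i).1.1 * x i + (σ i).1.2 * w i) ≤ t := by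
  classical
  constructor
  · intro H σ
    have h1 : ((∑ i, ((σ i).1.1 * x i + (σ i).1.2 * w i) : ℝ) : EReal)
        ≤ ∑ i, persp f (x i) (w i) := by
      rw [ecoe_sum]
      exact Finset.sum_le_sum fun i _ => lem_affine_le (σ i).2 (x i) (hw i)
    exact_mod_cast h1.trans H
  · obtain ⟨ab0, hab0⟩ := lem_S_nonempty hf
    have key : ∀ (F : Finset (Fin p)) (c : ℝ),
        (∀ σ : Fin p → AffMin f, ∑ i ∈ F, ((σ i).1.1 * x i + (σ i).1.2 * w i) ≤ c) →
        ∑ i ∈ F, persp f (x i) (w i) ≤ (c : EReal) := by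
      intro F
      induction F using Finset.induction_on with
      | empty =>
          intro c hc
          have := hc (fun _ => ⟨ab0, hab0⟩)
          simp only [Finset.sum_empty] at this ⊢
          exact_mod_cast this
      | @insert a F ha ih =>
          intro c hc
          rw [Finset.sum_insert ha]
          apply EReal.add_le_of_forall_lt
          intro A hA B hB
          rw [lem_persp_rep hf hf0 (x a) (hw a), lt_iSup_iff] at hA
          obtain ⟨ab, hab⟩ := hA
          have hF : ∑ i ∈ F, persp f (x i) (w i)
              ≤ ((c - (ab.1.1 * x a + ab.1.2 * w a) : ℝ) : EReal) := by
            apply ih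
            intro σ
            have := hc (Function.update σ a ab)
            rw [Finset.sum_insert ha, Function.update_self] at this
            have heq : ∑ i ∈ F, (((Function.update σ a ab) i).1.1 * x i
                + ((Function.update σ a ab) i).1.2 * w i)
                = ∑ i ∈ F, ((σ i).1.1 * x i + (σ i).1.2 * w i) := by
              apply Finset.sum_congr rfl
              intro i hi
              rw [Function.update_of_ne (by rintro rfl; exact ha hi)]
            rw [heq] at this
            linarith
          have hA' : A ≤ ((ab.1.1 * x a + ab.1.2 * w a : ℝ) : EReal) := le_of_lt hab
          have hB' : B ≤ ((c - (ab.1.1 * x a + ab.1.2 * w a) : ℝ) : EReal) :=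
            (le_of_lt hB).trans hF
          calc A + B ≤ ((ab.1.1 * x a + ab.1.2 * w a : ℝ) : EReal)
                + ((c - (ab.1.1 * x a + ab.1.2 * w a) : ℝ) : EReal) := add_le_add hA' hB'
            _ = ((c : ℝ) : EReal) := by norm_cast; ring
    exact key Finset.univ t

end sums

section convmem
variable {f : ℝ → ℝ}

lemma lem_conv_mem (hf0 : f 0 = 0) {p : ℕ} (h : Fin p → ℝ)
    (w β : Fin p → ℝ) (t : ℝ) (hw : ∀ i, 0 < w i) (hsum : ∑ i, w i < 1)
    (ht : ∑ i, w i * f (h i * β i / w i) ≤ t) :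
    (w, β, t) ∈ convexHull ℝ
      (ZQh p {z | (∀ i, z i = 0 ∨ z i = 1) ∧ ∑ i, z i ≤ (1 : ℝ)} f h) := by
  classical
  set Δ : ℝ := t - ∑ i, w i * f (h i * β i / w i) with hΔ
  have hΔ0 : 0 ≤ Δ := by rw [hΔ]; linarith
  have hw0 : (0:ℝ) < 1 - ∑ i, w i := by linarith
  set e : Fin p → Fin p → ℝ := fun i j => if j = i then 1 else 0 with he
  set bv : Fin p → Fin p → ℝ := fun i j => if j = i then β i / w i else 0 with hbv
  set W : Option (Fin p) → ℝ := fun o => o.elim (1 - ∑ i, w i) w with hW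
  set P : Option (Fin p) → (Fin p → ℝ) × (Fin p → ℝ) × ℝ := fun o =>
    o.elim ((fun _ => 0), (fun _ => 0), Δ / (1 - ∑ i, w i))
      (fun i => (e i, bv i, f (h i * β i / w i))) with hP
  have hW0 : ∀ o ∈ (Finset.univ : Finset (Option (Fin p))), 0 ≤ W o := by
    rintro (_ | i) _
    · exact le_of_lt hw0
    · exact (hw i).le
  have hWsum : ∑ o, W o = 1 := by
    rw [Fintype.sum_option]
    simp only [hW, Option.elim]
    ring
  have hPZ : ∀ o ∈ (Finset.univ : Finset (Option (Fin p))), P o ∈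
      ZQh p {z | (∀ i, z i = 0 ∨ z i = 1) ∧ ∑ i, z i ≤ (1 : ℝ)} f h := by
    rintro (_ | i) _
    · refine ⟨⟨fun i => Or.inl rfl, by simp only [hP, Option.elim]; simp⟩, ?_, fun i => by simp only [hP, Option.elim]; norm_num⟩
      simp only [hP, Option.elim]
      rw [show (∑ i, h i * (0:ℝ)) = 0 by simp, hf0]
      positivity
    · refine ⟨⟨fun j => ?_, ?_⟩, ?_, fun j => ?_⟩
      · simp only [hP, Option.elim, he]
        rcases eq_or_ne j i with rfl | hji
        · right; simp
        · left; simp [hji]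
      · simp only [hP, Option.elim, he]
        rw [Finset.sum_eq_single i (fun j _ hji => by simp [hji]) (fun hi => absurd (Finset.mem_univ i) hi)]
        simp
      · simp only [hP, Option.elim, hbv]
        have : ∑ j, h j * (if j = i then β i / w i else 0) = h i * (β i / w i) := by
          rw [Finset.sum_eq_single i (fun j _ hji => by simp [hji]) (fun hi => absurd (Finset.mem_univ i) hi)]
          simp
        rw [this, mul_div_assoc]
      · simp only [hP, Option.elim, he, hbv]
        rcases eq_or_ne j i with rfl | hji
        · simp
        · simp [hji]
  have hmem := Finset.centerMass_mem_convexHull (t := (Finset.univ : Finset (Option (Fin p))))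
    hW0 (by rw [hWsum]; norm_num) hPZ
  rw [Finset.centerMass_eq_of_sum_1 _ _ hWsum] at hmem
  have hfst : (∑ o, W o • P o).1 = w := by
    rw [Prod.fst_sum, Fintype.sum_option]
    funext j
    simp only [hP, hW, Option.elim, Prod.smul_mk, Finset.sum_apply, Pi.add_apply, Pi.smul_apply,
      smul_eq_mul, he, mul_zero, zero_add]
    rw [Finset.sum_eq_single j (fun i _ hij => by simp [Ne.symm hij]) (fun hj => absurd (Finset.mem_univ j) hj)]
    simp
  have hsnd1 : (∑ o, W o • P o).2.1 = β := by
    rw [Prod.snd_sum, Prod.fst_sum, Fintype.sum_option]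
    funext j
    simp only [hP, hW, Option.elim, Prod.smul_mk, Finset.sum_apply, Pi.add_apply, Pi.smul_apply,
      smul_eq_mul, hbv, mul_zero, zero_add]
    rw [Finset.sum_eq_single j (fun i _ hij => by simp [Ne.symm hij]) (fun hj => absurd (Finset.mem_univ j) hj)]
    simp only [if_pos rfl, ↓reduceIte]
    have hwj : w j ≠ 0 := ne_of_gt (hw j)
    field_simp
  have hsnd2 : (∑ o, W o • P o).2.2 = t := by
    rw [Prod.snd_sum, Prod.snd_sum, Fintype.sum_option]
    simp only [hP, hW, Option.elim, Prod.smul_mk, smul_eq_mul]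
    rw [mul_div_cancel₀ _ (ne_of_gt hw0)]
    rw [hΔ]
    ring
  have : (∑ o, W o • P o) = (w, β, t) := by
    apply Prod.ext hfst (Prod.ext hsnd1 hsnd2)
  rwa [this] at hmem

end convmem


section main
variable {f : ℝ → ℝ}

lemma lem_Z_sub (hf : ConvexOn ℝ Set.univ f) (hf0 : f 0 = 0) {p : ℕ} (h : Fin p → ℝ) :
    ZQh p {z | (∀ i, z i = 0 ∨ z i = 1) ∧ ∑ i, z i ≤ (1 : ℝ)} f h ⊆
      {x : (Fin p → ℝ) × (Fin p → ℝ) × ℝ |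
        (∀ i, x.1 i ∈ Set.Icc (0 : ℝ) 1) ∧
        ∑ i, x.1 i ≤ (1 : ℝ) ∧
        ∑ i, persp f (h i * x.2.1 i) (x.1 i) ≤ (x.2.2 : EReal)} := by
  classical
  rintro ⟨z, β, t⟩ ⟨⟨hz, hzs⟩, hft, hb⟩
  simp only [Set.mem_setOf_eq] at *
  have hz01 : ∀ i, z i ∈ Set.Icc (0:ℝ) 1 := by
    intro i; rcases hz i with h' | h' <;> rw [h'] <;> norm_num
  refine ⟨hz01, hzs, ?_⟩
  have hbz : ∀ j, z j = 0 → β j = 0 := by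
    intro j hj
    have := hb j
    rw [hj] at this; simpa using this
  by_cases hex : ∃ i0, z i0 = 1
  · obtain ⟨i0, hi0⟩ := hex
    have huniq : ∀ j, j ≠ i0 → z j = 0 := by
      intro j hj
      rcases hz j with h' | h'
      · exact h'
      · exfalso
        have h2 : ({i0, j} : Finset (Fin p)) ⊆ Finset.univ := Finset.subset_univ _
        have h3 : ∑ i ∈ ({i0, j} : Finset (Fin p)), z i ≤ ∑ i, z i := by
          apply Finset.sum_le_sum_of_subset_of_nonneg h2
          intro k _ _
          rcases hz k with h'' | h'' <;> rw [h''] <;> norm_num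
        rw [Finset.sum_pair (Ne.symm hj)] at h3
        rw [hi0, h'] at h3
        linarith
    have hsum1 : ∑ i, h i * β i = h i0 * β i0 := by
      apply Finset.sum_eq_single i0
      · intro j _ hj; rw [hbz j (huniq j hj), mul_zero]
      · intro hi; exact absurd (Finset.mem_univ i0) hi
    have hsum2 : ∑ i, persp f (h i * β i) (z i) = ((f (h i0 * β i0) : ℝ) : EReal) := by
      rw [Finset.sum_eq_single i0]
      · rw [hi0, lem_persp_one]
      · intro j _ hj
        rw [hbz j (huniq j hj), mul_zero, huniq j hj, lem_persp00 hf0]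
      · intro hi; exact absurd (Finset.mem_univ i0) hi
    rw [hsum2]
    rw [hsum1] at hft
    exact_mod_cast hft
  · push_neg at hex
    have hz0 : ∀ i, z i = 0 := by
      intro i; rcases hz i with h' | h'
      · exact h'
      · exact absurd h' (hex i)
    have hsum2 : ∑ i, persp f (h i * β i) (z i) = 0 := by
      rw [Finset.sum_eq_zero]
      intro j _
      rw [hbz j (hz0 j), mul_zero, hz0 j, lem_persp00 hf0]
    rw [hsum2]
    have : ∑ i, h i * β i = 0 := by
      apply Finset.sum_eq_zero
      intro j _; rw [hbz j (hz0 j), mul_zero]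
    rw [this, hf0] at hft
    exact_mod_cast hft

end main

/-- cardinality constraint with `q = 1`:
`Q_c = {z ∈ {0,1}^p : 𝟙ᵀz ≤ 1}` and the separable perspective description. -/
theorem statement8 (p : ℕ) (f : ℝ → ℝ) (hf : ConvexOn ℝ Set.univ f) (hf0 : f 0 = 0)
    (h : Fin p → ℝ) (hh : ∀ i, h i ≠ 0) :
    closure (convexHull ℝ
        (ZQh p {z | (∀ i, z i = 0 ∨ z i = 1) ∧ ∑ i, z i ≤ (1 : ℝ)} f h)) =
      {x : (Fin p → ℝ) × (Fin p → ℝ) × ℝ |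
        (∀ i, x.1 i ∈ Set.Icc (0 : ℝ) 1) ∧
        ∑ i, x.1 i ≤ (1 : ℝ) ∧
        ∑ i, persp f (h i * x.2.1 i) (x.1 i) ≤ (x.2.2 : EReal)} := by
  classical
  set Rset : Set ((Fin p → ℝ) × (Fin p → ℝ) × ℝ) :=
    {x : (Fin p → ℝ) × (Fin p → ℝ) × ℝ |
        (∀ i, x.1 i ∈ Set.Icc (0 : ℝ) 1) ∧
        ∑ i, x.1 i ≤ (1 : ℝ) ∧
        ∑ i, persp f (h i * x.2.1 i) (x.1 i) ≤ (x.2.2 : EReal)} with hRset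
  set Iform : Set ((Fin p → ℝ) × (Fin p → ℝ) × ℝ) :=
    (⋂ i, {x : (Fin p → ℝ) × (Fin p → ℝ) × ℝ | 0 ≤ x.1 i}) ∩
    (⋂ i, {x : (Fin p → ℝ) × (Fin p → ℝ) × ℝ | x.1 i ≤ 1}) ∩
    {x : (Fin p → ℝ) × (Fin p → ℝ) × ℝ | ∑ i, x.1 i ≤ 1} ∩
    (⋂ σ : Fin p → AffMin f, {x : (Fin p → ℝ) × (Fin p → ℝ) × ℝ |
      ∑ i, ((σ i).1.1 * (h i * x.2.1 i) + (σ i).1.2 * x.1 i) ≤ x.2.2}) with hIform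
  have hEq : Rset = Iform := by
    ext x
    simp only [hRset, hIform, Set.mem_setOf_eq, Set.mem_inter_iff, Set.mem_iInter,
      Set.mem_Icc]
    constructor
    · rintro ⟨h1, h2, h3⟩
      have hw : ∀ i, 0 ≤ x.1 i := fun i => (h1 i).1
      rw [lem_sum_le_iff hf hf0 (fun i => h i * x.2.1 i) x.1 hw x.2.2] at h3
      exact ⟨⟨⟨fun i => (h1 i).1, fun i => (h1 i).2⟩, h2⟩, h3⟩
    · rintro ⟨⟨⟨h1a, h1b⟩, h2⟩, h3⟩
      refine ⟨fun i => ⟨h1a i, h1b i⟩, h2, ?_⟩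
      rw [lem_sum_le_iff hf hf0 (fun i => h i * x.2.1 i) x.1 h1a x.2.2]
      exact h3
  apply Set.Subset.antisymm
  · rw [hEq]
    apply closure_minimal
    · apply convexHull_min
      · rw [← hEq]; exact lem_Z_sub hf hf0 h
      · -- convexity of Iform
        apply Convex.inter
        apply Convex.inter
        apply Convex.inter
        · apply convex_iInter
          intro i
          intro x hx y hy a b ha hb hab
          simp only [Set.mem_setOf_eq, Prod.fst_add, Prod.smul_fst, Pi.add_apply,
            Pi.smul_apply, smul_eq_mul] at *
          positivity
        · apply convex_iInter
          intro i
          intro x hx y hy a b ha hb hab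
          simp only [Set.mem_setOf_eq, Prod.fst_add, Prod.smul_fst, Pi.add_apply,
            Pi.smul_apply, smul_eq_mul] at *
          nlinarith
        · intro x hx y hy a b ha hb hab
          simp only [Set.mem_setOf_eq, Prod.fst_add, Prod.smul_fst, Pi.add_apply,
            Pi.smul_apply, smul_eq_mul, Finset.sum_add_distrib, ← Finset.mul_sum] at *
          nlinarith
        · apply convex_iInter
          intro σ
          intro x hx y hy a b ha hb hab
          simp only [Set.mem_setOf_eq, Prod.fst_add, Prod.snd_add, Prod.smul_fst,
            Prod.smul_snd, Pi.add_apply, Pi.smul_apply, smul_eq_mul] at *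
          have hkey : ∑ i, ((σ i).1.1 * (h i * (a * x.2.1 i + b * y.2.1 i))
              + (σ i).1.2 * (a * x.1 i + b * y.1 i))
              = a * (∑ i, ((σ i).1.1 * (h i * x.2.1 i) + (σ i).1.2 * x.1 i))
              + b * (∑ i, ((σ i).1.1 * (h i * y.2.1 i) + (σ i).1.2 * y.1 i)) := by
            rw [Finset.mul_sum, Finset.mul_sum, ← Finset.sum_add_distrib]
            apply Finset.sum_congr rfl
            intro i _
            ring
          rw [hkey]
          have := add_le_add (mul_le_mul_of_nonneg_left hx ha)
            (mul_le_mul_of_nonneg_left hy hb)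
          exact this
    · -- closedness of Iform
      apply IsClosed.inter
      apply IsClosed.inter
      apply IsClosed.inter
      · exact isClosed_iInter fun i =>
          isClosed_le continuous_const ((continuous_apply i).comp continuous_fst)
      · exact isClosed_iInter fun i =>
          isClosed_le ((continuous_apply i).comp continuous_fst) continuous_const
      · exact isClosed_le (continuous_finset_sum _ fun i _ =>
          (continuous_apply i).comp continuous_fst) continuous_const
      · refine isClosed_iInter fun σ => isClosed_le ?_ ?_
        · apply continuous_finset_sum
          intro i _
          apply Continuous.add
          · exact continuous_const.mul
              (continuous_const.mul ((continuous_apply i).comp (continuous_fst.comp continuous_snd)))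
          · exact continuous_const.mul ((continuous_apply i).comp continuous_fst)
        · exact continuous_snd.snd
  · -- reverse inclusion
    rintro ⟨z, β, t⟩ hx
    obtain ⟨hIcc, hzs, hxp⟩ := hx
    simp only at hIcc hzs hxp
    have h0 : ∀ i, (0:ℝ) ≤ z i := fun i => (hIcc i).1
    set s : Fin p → EReal := fun i => persp f (h i * β i) (z i) with hs
    have hbot : ∀ i, s i ≠ ⊥ := fun i => lem_persp_ne_bot hf _ (h0 i)
    have htop : ∀ i, s i ≠ ⊤ := fun i => esum_ne_top s hbot hxp i
    set r : Fin p → ℝ := fun i => (s i).toReal with hr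
    have hsr : ∀ i, s i = ((r i : ℝ) : EReal) := fun i =>
      (EReal.coe_toReal (htop i) (hbot i)).symm
    have hrt : ∑ i, r i ≤ t := by
      have : ∑ i, s i = ((∑ i, r i : ℝ) : EReal) := by
        rw [ecoe_sum]
        exact Finset.sum_congr rfl fun i _ => hsr i
      rw [this] at hxp
      exact_mod_cast hxp
    set ε : ℕ → ℝ := fun n => 1 / (n + 1) with hε
    set δ : ℕ → ℝ := fun n => 1 / ((n + 1) * (p + 1)) with hδ
    have hεpos : ∀ n, 0 < ε n := fun n => by positivity
    have hεle1 : ∀ n, ε n ≤ 1 := fun n => by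
      rw [hε]; rw [div_le_one (by positivity)]; simp
    have hδpos : ∀ n, 0 < δ n := fun n => by positivity
    have hδanti : ∀ m n, m ≤ n → δ n ≤ δ m := by
      intro m n hmn
      apply one_div_le_one_div_of_le
      · positivity
      · have : (m:ℝ) ≤ n := Nat.cast_le.mpr hmn
        have hp1 : (0:ℝ) < p + 1 := by positivity
        nlinarith
    have hε0 : Filter.Tendsto ε Filter.atTop (nhds 0) :=
      tendsto_one_div_add_atTop_nhds_zero_nat
    have hδ0 : Filter.Tendsto δ Filter.atTop (nhds 0) := by
      have heq : δ = fun n : ℕ => (1 / ((n:ℝ) + 1)) * (1 / ((p:ℝ) + 1)) := by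
        funext n; rw [hδ, one_div_mul_one_div]
      rw [heq]
      have := hε0.mul_const (1 / ((p:ℝ) + 1))
      simpa [hε] using this
    set zn : ℕ → Fin p → ℝ := fun n i => (1 - ε n) * z i + δ n with hzn
    have hznpos : ∀ n i, 0 < zn n i := by
      intro n i
      have h1 : 0 ≤ (1 - ε n) * z i := mul_nonneg (by linarith [hεle1 n]) (h0 i)
      have := hδpos n
      rw [hzn]; dsimp only; linarith
    have hεδ : ∀ n, ε n = (p + 1) * δ n := by
      intro n
      rw [hε, hδ]
      field_simp
    have hznsum : ∀ n, ∑ i, zn n i < 1 := by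
      intro n
      have h1 : ∑ i, zn n i = (1 - ε n) * (∑ i, z i) + p * δ n := by
        rw [hzn]
        dsimp only
        rw [Finset.sum_add_distrib, ← Finset.mul_sum, Finset.sum_const, Finset.card_univ,
          Fintype.card_fin, nsmul_eq_mul]
      rw [h1]
      have h2 : (1 - ε n) * (∑ i, z i) ≤ (1 - ε n) * 1 :=
        mul_le_mul_of_nonneg_left hzs (by linarith [hεle1 n])
      have h3 : (1 - ε n) * 1 + p * δ n = 1 - δ n := by
        rw [hεδ n]; ring
      have := hδpos n
      linarith
    have hzn_tend : ∀ i, Filter.Tendsto (fun n => zn n i) Filter.atTop (nhds (z i)) := by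
      intro i
      have h1 : Filter.Tendsto (fun n => (1 - ε n) * z i + δ n) Filter.atTop
          (nhds ((1 - 0) * z i + 0)) :=
        (((tendsto_const_nhds.sub hε0).mul tendsto_const_nhds).add hδ0)
      simpa using h1
    set Gterm : ℕ → Fin p → ℝ := fun n i => zn n i * f (h i * β i / zn n i) with hGterm
    have hterm : ∀ i, Filter.Tendsto (fun n => Gterm n i) Filter.atTop (nhds (r i)) := by
      intro i
      rcases (h0 i).lt_or_eq with hzi | hzi
      · -- z i > 0
        have hsi : s i = ((z i * f (h i * β i / z i) : ℝ) : EReal) := by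
          rw [hs]; dsimp only; rw [persp, if_pos hzi]
        have hri : r i = z i * f (h i * β i / z i) := by
          rw [hr]; dsimp only; rw [hsi, EReal.toReal_coe]
        rw [hri]
        apply Filter.Tendsto.mul (hzn_tend i)
        have hdiv : Filter.Tendsto (fun n => h i * β i / zn n i) Filter.atTop
            (nhds (h i * β i / z i)) :=
          Filter.Tendsto.div tendsto_const_nhds (hzn_tend i) (ne_of_gt hzi)
        exact ((lem_cont hf).tendsto _).comp hdiv
      · -- z i = 0
        have hzi' : z i = 0 := hzi.symm
        have hzn_eq : ∀ n, zn n i = δ n := by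
          intro n; rw [hzn]; dsimp only; rw [hzi']; ring
        set u : ℕ → EReal := fun n => ((δ n * f (h i * β i / δ n) : ℝ) : EReal) with hu
        have hmono : Monotone u := by
          intro m n hmn
          exact EReal.coe_le_coe_iff.mpr
            (lem_antitone hf hf0 (h i * β i) (hδpos n) (hδanti m n hmn))
        have htend : Filter.Tendsto u Filter.atTop (nhds (⨆ n, u n)) :=
          tendsto_atTop_iSup hmono
        have hpersp0 : s i = persp f (h i * β i) 0 := by rw [hs]; dsimp only; rw [hzi']
        have hsup_le : (⨆ n, u n) ≤ s i := by
          rw [hpersp0]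
          exact iSup_le fun n => lem_G_le_persp0 hf hf0 _ (hδpos n)
        have hle_sup : s i ≤ ⨆ n, u n := by
          rw [hpersp0, persp, if_neg (lt_irrefl 0)]
          refine limsup_le_of_le (by isBoundedDefault) ?_
          filter_upwards [eventually_mem_nhdsWithin] with v hv
          have hv' : (0:ℝ) < v := Set.mem_Ioi.mp hv
          obtain ⟨n, hn⟩ := (hδ0.eventually_lt_const hv').exists
          have h1 : v * f (h i * β i / v) ≤ δ n * f (h i * β i / δ n) :=
            lem_antitone hf hf0 _ (hδpos n) (le_of_lt hn)
          calc ((v * f (h i * β i / v) : ℝ) : EReal)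
              ≤ u n := EReal.coe_le_coe_iff.mpr h1
            _ ≤ ⨆ n, u n := le_iSup u n
        have hsup_eq : (⨆ n, u n) = ((r i : ℝ) : EReal) := by
          rw [← hsr i]
          exact le_antisymm hsup_le hle_sup
        rw [hsup_eq] at htend
        have hreal : Filter.Tendsto (fun n => δ n * f (h i * β i / δ n)) Filter.atTop
            (nhds (r i)) := by
          rw [← EReal.tendsto_coe]
          exact htend
        have : (fun n => Gterm n i) = fun n => δ n * f (h i * β i / δ n) := by
          funext n; rw [hGterm]; dsimp only; rw [hzn_eq n]
        rw [this]
        exact hreal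
    have hGn : Filter.Tendsto (fun n => ∑ i, Gterm n i) Filter.atTop (nhds (∑ i, r i)) :=
      tendsto_finset_sum _ fun i _ => hterm i
    have htn : Filter.Tendsto (fun n => max t (∑ i, Gterm n i)) Filter.atTop (nhds t) := by
      have h1 := Filter.Tendsto.max (tendsto_const_nhds : Filter.Tendsto (fun _ : ℕ => t) Filter.atTop (nhds t)) hGn
      rwa [max_eq_left hrt] at h1
    have hmemconv : ∀ n, (zn n, β, max t (∑ i, Gterm n i)) ∈ convexHull ℝ
        (ZQh p {z | (∀ i, z i = 0 ∨ z i = 1) ∧ ∑ i, z i ≤ (1 : ℝ)} f h) := by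
      intro n
      exact lem_conv_mem hf0 h (zn n) β _ (hznpos n) (hznsum n) (le_max_right _ _)
    have hu : Filter.Tendsto (fun n => (zn n, β, max t (∑ i, Gterm n i)))
        Filter.atTop (nhds (z, β, t)) := by
      apply Filter.Tendsto.prodMk_nhds
      · exact tendsto_pi_nhds.mpr hzn_tend
      · exact Filter.Tendsto.prodMk_nhds tendsto_const_nhds htn
    exact mem_closure_of_tendsto hu (Filter.Eventually.of_forall hmemconv)
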